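/- (Stability of the norm of the reconstructor.) Let D and D̃ be dictionaries with ‖D − D̃‖_{1,2} ≤ λ, let a* be a minimizer of the LASSO objective for D at x and ã* a minimizer of the LASSO objective for D̃ at x. Then | ‖D a*‖_2² − ‖D̃ ã*‖_2² | ≤ 2 |v_D(x) − v_{D̃}(x)| ≤ (1 + ‖x‖_2/4) ‖x‖_2³ · ‖D − D̃‖_{1,2} / λ. -/

import Mathlib

open Finset Matrix

noncomputable def norm2 {ι : Type*} [Fintype ι] (v : ι → ℝ) : ℝ :=
  Real.sqrt (∑ i, v i ^ 2)

noncomputable def norm1 {ι : Type*} [Fintype ι] (v : ι → ℝ) : ℝ :=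
  ∑ i, |v i|

noncomputable def norm0 {ι : Type*} (v : ι → ℝ) : ℕ :=
  Set.ncard {i | v i ≠ 0}

noncomputable def dot {ι : Type*} [Fintype ι] (u v : ι → ℝ) : ℝ :=
  ∑ i, u i * v i

def col {d m : ℕ} (D : Matrix (Fin d) (Fin m) ℝ) (i : Fin m) : Fin d → ℝ :=
  fun r => D r i

def IsDictionary {d m : ℕ} (D : Matrix (Fin d) (Fin m) ℝ) : Prop :=
  ∀ i, norm2 (_root_.col D i) = 1

noncomputable def norm12 {d m : ℕ} (E : Matrix (Fin d) (Fin m) ℝ) : ℝ :=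
  ⨆ i : Fin m, norm2 (_root_.col E i)

noncomputable def lassoObj {d m : ℕ} (lam : ℝ) (D : Matrix (Fin d) (Fin m) ℝ)
    (x : Fin d → ℝ) (z : Fin m → ℝ) : ℝ :=
  (1/2) * (norm2 (x - D.mulVec z))^2 + lam * norm1 z

def IsLassoMin {d m : ℕ} (lam : ℝ) (D : Matrix (Fin d) (Fin m) ℝ)
    (x : Fin d → ℝ) (a : Fin m → ℝ) : Prop :=
  ∀ z, lassoObj lam D x a ≤ lassoObj lam D x z

def Incoherent {d m : ℕ} (mu : ℝ) (D : Matrix (Fin d) (Fin m) ℝ) : Prop :=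
  ∀ i j, i ≠ j → |dot (_root_.col D i) (_root_.col D j)| ≤ mu / Real.sqrt d

noncomputable def kMargin {d m : ℕ} (lam : ℝ) (k : ℕ) (D : Matrix (Fin d) (Fin m) ℝ)
    (x : Fin d → ℝ) (a : Fin m → ℝ) : ℝ :=
  ⨆ I : {I : Finset (Fin m) // I.card = m - k},
    ⨅ j : {j : Fin m // j ∈ I.1}, (lam - |dot (_root_.col D j.1) (x - D.mulVec a)|)

noncomputable def toE {ι : Type*} [Fintype ι] (v : ι → ℝ) : EuclideanSpace ℝ ι :=
  (WithLp.equiv 2 _).symm v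

lemma norm2_eq_norm {ι : Type*} [Fintype ι] (v : ι → ℝ) : norm2 v = ‖toE v‖ := by
  rw [EuclideanSpace.norm_eq]
  simp [norm2, toE, Real.norm_eq_abs, sq_abs]

lemma norm2_nonneg {ι : Type*} [Fintype ι] (v : ι → ℝ) : 0 ≤ norm2 v := by
  rw [norm2_eq_norm]; exact norm_nonneg _

lemma norm2_neg {ι : Type*} [Fintype ι] (v : ι → ℝ) : norm2 (-v) = norm2 v := by
  rw [norm2_eq_norm, norm2_eq_norm]
  have : toE (-v) = -toE v := rfl
  rw [this, norm_neg]

lemma sq_norm2 {ι : Type*} [Fintype ι] (v : ι → ℝ) : (norm2 v) ^ 2 = ∑ i, v i ^ 2 := by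
  rw [norm2, Real.sq_sqrt]
  exact Finset.sum_nonneg fun i _ => sq_nonneg _

lemma norm1_nonneg {ι : Type*} [Fintype ι] (v : ι → ℝ) : 0 ≤ norm1 v :=
  Finset.sum_nonneg fun i _ => abs_nonneg _

lemma norm1_zero {ι : Type*} [Fintype ι] : norm1 (0 : ι → ℝ) = 0 := by simp [norm1]

lemma norm1_smul {ι : Type*} [Fintype ι] (c : ℝ) (v : ι → ℝ) :
    norm1 (c • v) = |c| * norm1 v := by
  simp [norm1, abs_mul, Finset.mul_sum]

lemma quad_key (A b : ℝ) (hA : 0 ≤ A) (h : ∀ t : ℝ, 0 ≤ t → A + b ≤ A * t ^ 2 + b * t) :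
    2 * A + b = 0 := by
  have key : ∀ ε : ℝ, 0 < ε → ε ≤ 1 → |2 * A + b| ≤ A * ε := by
    intro ε hε hε1
    have h1 := h (1 + ε) (by linarith)
    have h2 := h (1 - ε) (by linarith)
    rw [abs_le]
    constructor <;> nlinarith
  have h0 : |2 * A + b| ≤ 0 := by
    by_contra h'
    push_neg at h'
    have hε : 0 < min 1 (|2 * A + b| / (A + 1)) :=
      lt_min one_pos (div_pos h' (by linarith))
    have h1 := key _ hε (min_le_left _ _)
    have h2 : A * min 1 (|2 * A + b| / (A + 1)) ≤ A * (|2 * A + b| / (A + 1)) :=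
      mul_le_mul_of_nonneg_left (min_le_right _ _) hA
    have h3 : A * (|2 * A + b| / (A + 1)) < |2 * A + b| := by
      have hlt : A / (A + 1) < 1 := (div_lt_one (by linarith)).mpr (by linarith)
      calc A * (|2 * A + b| / (A + 1)) = (A / (A + 1)) * |2 * A + b| := by ring
        _ < 1 * |2 * A + b| := mul_lt_mul_of_pos_right hlt h'
        _ = |2 * A + b| := one_mul _
    linarith
  exact abs_eq_zero.mp (le_antisymm h0 (abs_nonneg _))

lemma expand_sq {ι : Type*} [Fintype ι] (x y : ι → ℝ) (t : ℝ) :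
    ∑ i, (x i - t * y i) ^ 2
      = (∑ i, x i ^ 2) - 2 * t * dot x y + t ^ 2 * ∑ i, y i ^ 2 := by
  have h : ∀ i : ι, (x i - t * y i) ^ 2
      = x i ^ 2 - 2 * t * (x i * y i) + t ^ 2 * y i ^ 2 := fun i => by ring
  simp_rw [h, Finset.sum_add_distrib, Finset.sum_sub_distrib, ← Finset.mul_sum, dot]

lemma lasso_min_identity {d m : ℕ} (lam : ℝ) (D : Matrix (Fin d) (Fin m) ℝ)
    (x : Fin d → ℝ) (a : Fin m → ℝ) (ha : IsLassoMin lam D x a) :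
    dot x (D.mulVec a) - (∑ i, (D.mulVec a) i ^ 2) = lam * norm1 a := by
  set y := D.mulVec a with hy
  set A : ℝ := (1/2) * ∑ i, y i ^ 2 with hA
  set b : ℝ := lam * norm1 a - dot x y with hb
  have hobj : ∀ t : ℝ, 0 ≤ t →
      lassoObj lam D x (t • a) = (1/2) * ∑ i, x i ^ 2 + (A * t ^ 2 + b * t) := by
    intro t ht
    rw [lassoObj, sq_norm2, Matrix.mulVec_smul, norm1_smul, abs_of_nonneg ht]
    have h2 : ∀ i, (x - t • y) i = x i - t * y i := fun i => rfl
    rw [← hy]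
    simp_rw [h2, expand_sq]
    rw [hA, hb]; ring
  have hobj1 : lassoObj lam D x a = (1/2) * ∑ i, x i ^ 2 + (A + b) := by
    have := hobj 1 zero_le_one
    simpa using this
  have hmin : ∀ t : ℝ, 0 ≤ t → A + b ≤ A * t ^ 2 + b * t := by
    intro t ht
    have h3 := ha (t • a)
    rw [hobj1, hobj t ht] at h3
    exact le_of_add_le_add_left h3
  have h0 := quad_key A b (by positivity) hmin
  rw [hA, hb] at h0
  linarith

lemma iInf_lasso {d m : ℕ} (lam : ℝ) (D : Matrix (Fin d) (Fin m) ℝ)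
    (x : Fin d → ℝ) (a : Fin m → ℝ) (ha : IsLassoMin lam D x a) :
    (⨅ z : Fin m → ℝ, lassoObj lam D x z) = lassoObj lam D x a := by
  apply le_antisymm
  · exact ciInf_le ⟨lassoObj lam D x a, fun r hr => by obtain ⟨z, rfl⟩ := hr; exact ha z⟩ a
  · exact le_ciInf ha

lemma lasso_value {d m : ℕ} (lam : ℝ) (D : Matrix (Fin d) (Fin m) ℝ)
    (x : Fin d → ℝ) (a : Fin m → ℝ) (ha : IsLassoMin lam D x a) :
    lassoObj lam D x a = (1/2) * (norm2 x) ^ 2 - (1/2) * (norm2 (D.mulVec a)) ^ 2 := by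
  have hid := lasso_min_identity lam D x a ha
  rw [lassoObj, sq_norm2, sq_norm2, sq_norm2]
  have h2 : ∀ i, (x - D.mulVec a) i = x i - 1 * (D.mulVec a) i := fun i => by
    simp [Pi.sub_apply]
  simp_rw [h2, expand_sq]
  rw [← hid]; ring

lemma norm12_nonneg {d m : ℕ} (E : Matrix (Fin d) (Fin m) ℝ) : 0 ≤ norm12 E := by
  rcases isEmpty_or_nonempty (Fin m) with h | h
  · rw [norm12, Real.iSup_of_isEmpty]
  · obtain ⟨i⟩ := h
    refine le_trans (norm2_nonneg (_root_.col E i)) ?_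
    exact le_ciSup (f := fun j : Fin m => norm2 (_root_.col E j))
      (Set.Finite.bddAbove (Set.finite_range _)) i

lemma col_le_norm12 {d m : ℕ} (E : Matrix (Fin d) (Fin m) ℝ) (i : Fin m) :
    norm2 (_root_.col E i) ≤ norm12 E := by
  exact le_ciSup (f := fun j : Fin m => norm2 (_root_.col E j))
    (Set.Finite.bddAbove (Set.finite_range _)) i

lemma norm12_sub_comm {d m : ℕ} (D Dt : Matrix (Fin d) (Fin m) ℝ) :
    norm12 (Dt - D) = norm12 (D - Dt) := by
  unfold norm12
  apply iSup_congr
  intro i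
  have h : _root_.col (Dt - D) i = -(_root_.col (D - Dt) i) := by
    ext r
    simp only [_root_.col, Matrix.sub_apply, Pi.neg_apply]
    ring
  rw [h, norm2_neg]

lemma mulVec_norm2_le {d m : ℕ} (E : Matrix (Fin d) (Fin m) ℝ) (z : Fin m → ℝ) :
    norm2 (E.mulVec z) ≤ norm12 E * norm1 z := by
  have hEv : E.mulVec z = ∑ i, z i • _root_.col E i := by
    ext r
    rw [Finset.sum_apply]
    simp only [Pi.smul_apply, smul_eq_mul, _root_.col]
    simp [Matrix.mulVec, dotProduct, mul_comm]
  rw [hEv, norm2_eq_norm]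
  have h1 : toE (∑ i, z i • _root_.col E i) = ∑ i, toE (z i • _root_.col E i) := by simp [toE]
  rw [h1]
  calc ‖∑ i, toE (z i • _root_.col E i)‖ ≤ ∑ i, ‖toE (z i • _root_.col E i)‖ :=
        norm_sum_le _ _
    _ = ∑ i, |z i| * norm2 (_root_.col E i) := by
        apply Finset.sum_congr rfl
        intro i _
        have h2 : toE (z i • _root_.col E i) = z i • toE (_root_.col E i) := rfl
        rw [h2, norm_smul, Real.norm_eq_abs, ← norm2_eq_norm]
    _ ≤ ∑ i, |z i| * norm12 E := by
        apply Finset.sum_le_sum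
        intro i _
        exact mul_le_mul_of_nonneg_left (col_le_norm12 E i) (abs_nonneg _)
    _ = norm12 E * norm1 z := by rw [norm1, ← Finset.sum_mul]; ring

lemma norm2_sub_norm2_le {ι : Type*} [Fintype ι] (u w : ι → ℝ) :
    norm2 u - norm2 w ≤ norm2 (u - w) := by
  rw [norm2_eq_norm, norm2_eq_norm, norm2_eq_norm]
  have h : toE (u - w) = toE u - toE w := rfl
  rw [h]
  exact norm_sub_norm_le _ _

lemma lasso_one_side {d m : ℕ} (lam : ℝ) (hlam : 0 < lam)
    (D Dt : Matrix (Fin d) (Fin m) ℝ) (hclose : norm12 (D - Dt) ≤ lam)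
    (x : Fin d → ℝ) (a at' : Fin m → ℝ)
    (ha : IsLassoMin lam D x a) (hat : IsLassoMin lam Dt x at') :
    lassoObj lam D x a - lassoObj lam Dt x at'
      ≤ ((norm2 x) ^ 3 / 2 + (norm2 x) ^ 4 / 8) * norm12 (D - Dt) / lam := by
  have hX0 : 0 ≤ norm2 x := norm2_nonneg x
  have hε0 : 0 ≤ norm12 (D - Dt) := norm12_nonneg _
  have hw0 : 0 ≤ norm2 (x - Dt.mulVec at') := norm2_nonneg _
  have hu0 : 0 ≤ norm2 (x - D.mulVec at') := norm2_nonneg _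
  have hzero : (1/2) * (norm2 (x - Dt.mulVec at')) ^ 2 + lam * norm1 at'
      ≤ (1/2) * (norm2 x) ^ 2 := by
    have h := hat 0
    simp only [lassoObj, Matrix.mulVec_zero, sub_zero, norm1_zero, mul_zero, add_zero] at h
    exact h
  have hn1 : 0 ≤ lam * norm1 at' := mul_nonneg hlam.le (norm1_nonneg _)
  have hwle : norm2 (x - Dt.mulVec at') ≤ norm2 x := by nlinarith
  have h1 : norm1 at' ≤ (norm2 x) ^ 2 / (2 * lam) := by
    rw [le_div_iff₀ (by positivity : (0:ℝ) < 2 * lam)]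
    nlinarith [sq_nonneg (norm2 (x - Dt.mulVec at'))]
  have hEb : norm2 ((D - Dt).mulVec at')
      ≤ norm12 (D - Dt) * ((norm2 x) ^ 2 / (2 * lam)) :=
    le_trans (mulVec_norm2_le _ _) (mul_le_mul_of_nonneg_left h1 hε0)
  have hEb2 : norm2 ((D - Dt).mulVec at') ≤ (norm2 x) ^ 2 / 2 := by
    have h2 : norm12 (D - Dt) * ((norm2 x) ^ 2 / (2 * lam))
        ≤ lam * ((norm2 x) ^ 2 / (2 * lam)) :=
      mul_le_mul_of_nonneg_right hclose (by positivity)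
    have h3 : lam * ((norm2 x) ^ 2 / (2 * lam)) = (norm2 x) ^ 2 / 2 := by
      field_simp
    linarith
  have huw : (x - D.mulVec at') - (x - Dt.mulVec at') = -((D - Dt).mulVec at') := by
    ext r
    simp [Matrix.sub_mulVec, Pi.sub_apply]
  have hnuw : norm2 ((x - D.mulVec at') - (x - Dt.mulVec at'))
      = norm2 ((D - Dt).mulVec at') := by rw [huw, norm2_neg]
  have htri := norm2_sub_norm2_le (x - D.mulVec at') (x - Dt.mulVec at')
  rw [hnuw] at htri
  have hule : norm2 (x - D.mulVec at') ≤ norm2 x + (norm2 x) ^ 2 / 2 := by linarith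
  have hstep : lassoObj lam D x a ≤ lassoObj lam D x at' := ha at'
  have hdiff : lassoObj lam D x at' - lassoObj lam Dt x at'
      = (1/2) * ((norm2 (x - D.mulVec at')) ^ 2 - (norm2 (x - Dt.mulVec at')) ^ 2) := by
    rw [lassoObj, lassoObj]; ring
  have hfac : (norm2 (x - D.mulVec at')) ^ 2 - (norm2 (x - Dt.mulVec at')) ^ 2
      ≤ (norm2 (x - D.mulVec at') + norm2 (x - Dt.mulVec at'))
          * norm2 ((D - Dt).mulVec at') := by nlinarith
  have hbound : (norm2 (x - D.mulVec at') + norm2 (x - Dt.mulVec at'))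
        * norm2 ((D - Dt).mulVec at')
      ≤ (norm2 x + (norm2 x) ^ 2 / 2 + norm2 x)
          * (norm12 (D - Dt) * ((norm2 x) ^ 2 / (2 * lam))) :=
    mul_le_mul (by linarith) hEb (norm2_nonneg _) (by positivity)
  have hfinal : lassoObj lam D x a - lassoObj lam Dt x at'
      ≤ (1/2) * ((norm2 x + (norm2 x) ^ 2 / 2 + norm2 x)
          * (norm12 (D - Dt) * ((norm2 x) ^ 2 / (2 * lam)))) := by
    linarith
  calc lassoObj lam D x a - lassoObj lam Dt x at'
       ≤ (1/2) * ((norm2 x + (norm2 x) ^ 2 / 2 + norm2 x)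
          * (norm12 (D - Dt) * ((norm2 x) ^ 2 / (2 * lam)))) := hfinal
    _ = ((norm2 x) ^ 3 / 2 + (norm2 x) ^ 4 / 8) * norm12 (D - Dt) / lam := by
        field_simp
        ring

/-- Stability of the norm of the reconstructor. -/
theorem reconstructor_norm_stability {d m : ℕ} (lam : ℝ) (hlam : 0 < lam)
    (D Dt : Matrix (Fin d) (Fin m) ℝ) (hD : IsDictionary D) (hDt : IsDictionary Dt)
    (hclose : norm12 (D - Dt) ≤ lam) (x : Fin d → ℝ)
    (a at' : Fin m → ℝ) (ha : IsLassoMin lam D x a) (hat : IsLassoMin lam Dt x at') :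
    |(norm2 (D.mulVec a))^2 - (norm2 (Dt.mulVec at'))^2|
        ≤ 2 * |(⨅ z : Fin m → ℝ, lassoObj lam D x z) - (⨅ z : Fin m → ℝ, lassoObj lam Dt x z)| ∧
      2 * |(⨅ z : Fin m → ℝ, lassoObj lam D x z) - (⨅ z : Fin m → ℝ, lassoObj lam Dt x z)|
        ≤ (1 + norm2 x / 4) * (norm2 x)^3 * norm12 (D - Dt) / lam := by
  have hv1e : (⨅ z : Fin m → ℝ, lassoObj lam D x z) = lassoObj lam D x a :=
    iInf_lasso lam D x a ha
  have hv2e : (⨅ z : Fin m → ℝ, lassoObj lam Dt x z) = lassoObj lam Dt x at' :=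
    iInf_lasso lam Dt x at' hat
  have hval1 : lassoObj lam D x a = (1/2) * (norm2 x) ^ 2 - (1/2) * (norm2 (D.mulVec a)) ^ 2 :=
    lasso_value lam D x a ha
  have hval2 : lassoObj lam Dt x at'
      = (1/2) * (norm2 x) ^ 2 - (1/2) * (norm2 (Dt.mulVec at')) ^ 2 :=
    lasso_value lam Dt x at' hat
  rw [hv1e, hv2e]
  constructor
  · have heq : (norm2 (D.mulVec a)) ^ 2 - (norm2 (Dt.mulVec at')) ^ 2
        = 2 * (lassoObj lam Dt x at' - lassoObj lam D x a) := by
      rw [hval1, hval2]; ring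
    rw [heq, abs_mul, abs_two, abs_sub_comm]
  · have hside1 := lasso_one_side lam hlam D Dt hclose x a at' ha hat
    have hside2 := lasso_one_side lam hlam Dt D
      (by rw [norm12_sub_comm]; exact hclose) x at' a hat ha
    rw [norm12_sub_comm] at hside2
    have habs : |lassoObj lam D x a - lassoObj lam Dt x at'|
        ≤ ((norm2 x) ^ 3 / 2 + (norm2 x) ^ 4 / 8) * norm12 (D - Dt) / lam := by
      rw [abs_le]
      exact ⟨by linarith, hside1⟩
    have h2 : 2 * (((norm2 x) ^ 3 / 2 + (norm2 x) ^ 4 / 8) * norm12 (D - Dt) / lam)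
        = (1 + norm2 x / 4) * (norm2 x) ^ 3 * norm12 (D - Dt) / lam := by
      ring
    linarith
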